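/- For a group monomorphism i: H → Γ, the extension-by-zero map sᵢ : D(H) → D(Γ), defined by sᵢ(f)(g) = f(h) if g = i(h) and sᵢ(f)(g) = 0 if g ∉ i(H), is a well-defined linear isometric embedding with respect to the defect norms. -/
import Mathlib


/-- The defect norm of a real-valued function on a group. -/
noncomputable def defectNorm {G : Type*} [Group G] (f : G → ℝ) : ℝ :=
  ⨆ p : G × G, |f (p.1 * p.2) - f p.1 - f p.2|

/-- The defect space `D(Γ)`: bounded alternating real-valued functions on `Γ`. -/
def defectSpace (Γ : Type*) [Group Γ] : Set (Γ → ℝ) :=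
  {f | (∃ C : ℝ, ∀ g : Γ, |f g| ≤ C) ∧ ∀ g : Γ, f g⁻¹ = -f g}

/-- The extension-by-zero of `f : H → ℝ` along a monomorphism `i : H → Γ`:
`sᵢ(f)(g) = f(h)` if `g = i(h)` and `0` if `g` is not in the image of `i`. -/
noncomputable def extendByZero {H Γ : Type*} [Group H] [Group Γ]
    (i : H →* Γ) (f : H → ℝ) : Γ → ℝ :=
  Function.extend i f 0

section Aux

variable {G : Type*} [Group G]

lemma defect_bddAbove {f : G → ℝ} {C : ℝ} (hC : ∀ g, |f g| ≤ C) :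
    BddAbove (Set.range fun p : G × G => |f (p.1 * p.2) - f p.1 - f p.2|) := by
  refine ⟨3 * C, ?_⟩
  rintro x ⟨p, rfl⟩
  have h1 := abs_le.mp (hC (p.1 * p.2))
  have h2 := abs_le.mp (hC p.1)
  have h3 := abs_le.mp (hC p.2)
  rw [abs_le]
  constructor <;> linarith

lemma le_defectNorm {f : G → ℝ} {C : ℝ} (hC : ∀ g, |f g| ≤ C) (g h : G) :
    |f (g * h) - f g - f h| ≤ defectNorm f :=
  le_ciSup (defect_bddAbove hC) (g, h)

lemma defectNorm_nonneg {f : G → ℝ} {C : ℝ} (hC : ∀ g, |f g| ≤ C) :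
    0 ≤ defectNorm f :=
  (abs_nonneg _).trans (le_defectNorm hC 1 1)

lemma abs_le_defectNorm {f : G → ℝ} {C : ℝ} (hC : ∀ g, |f g| ≤ C) (g : G) :
    |f g| ≤ defectNorm f := by
  haveI : Nonempty G := ⟨1⟩
  set S : ℝ := ⨆ g : G, |f g| with hS
  have hb : BddAbove (Set.range fun g : G => |f g|) := ⟨C, by rintro x ⟨g, rfl⟩; exact hC g⟩
  have key : ∀ g : G, |f g| ≤ (S + defectNorm f) / 2 := by
    intro g
    have h2 : |f (g * g)| ≤ S := le_ciSup hb (g * g)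
    have h3 := le_defectNorm hC g g
    have h4 := abs_le.mp h2
    have h5 := abs_le.mp h3
    rw [abs_le]
    constructor <;> linarith
  have hSle : S ≤ (S + defectNorm f) / 2 := ciSup_le key
  have : |f g| ≤ S := le_ciSup hb g
  linarith

end Aux

section AuxExt

variable {H Γ : Type*} [Group H] [Group Γ]

lemma extendByZero_apply_mem (i : H →* Γ) (hi : Function.Injective i) (f : H → ℝ) (h : H) :
    extendByZero i f (i h) = f h := hi.extend_apply f 0 h

lemma extendByZero_apply_not_mem (i : H →* Γ) (f : H → ℝ) {g : Γ}
    (hg : ¬∃ a, i a = g) : extendByZero i f g = 0 := by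
  rw [extendByZero, Function.extend_apply' f (0 : Γ → ℝ) g hg]; rfl

end AuxExt

/-- **Extension by zero is a linear isometric embedding `D(H) ↪ D(Γ)`** for a
monomorphism `i : H → Γ`, with respect to the defect norms. -/
theorem extendByZero_isometric_embedding {H Γ : Type*} [Group H] [Group Γ]
    (i : H →* Γ) (hi : Function.Injective i) :
    -- well-defined: maps `D(H)` into `D(Γ)`
    (∀ f ∈ defectSpace H, extendByZero i f ∈ defectSpace Γ) ∧
    -- linear
    (∀ f g : H → ℝ, extendByZero i (f + g) = extendByZero i f + extendByZero i g) ∧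
    (∀ (a : ℝ) (f : H → ℝ), extendByZero i (a • f) = a • extendByZero i f) ∧
    -- isometric w.r.t. the defect norms
    (∀ f ∈ defectSpace H, defectNorm (extendByZero i f) = defectNorm f) ∧
    -- embedding
    (∀ f ∈ defectSpace H, ∀ g ∈ defectSpace H,
      extendByZero i f = extendByZero i g → f = g) := by
  -- bound on the extension
  have hbound : ∀ (f : H → ℝ) (C : ℝ), (∀ h, |f h| ≤ C) → ∀ g : Γ, |extendByZero i f g| ≤ C := by
    intro f C hC g
    by_cases hg : ∃ a, i a = g
    · obtain ⟨a, rfl⟩ := hg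
      rw [extendByZero_apply_mem i hi]
      exact hC a
    · rw [extendByZero_apply_not_mem i f hg, abs_zero]
      exact (abs_nonneg _).trans (hC 1)
  refine ⟨?_, ?_, ?_, ?_, ?_⟩
  · -- well-defined
    rintro f ⟨⟨C, hC⟩, halt⟩
    refine ⟨⟨C, hbound f C hC⟩, ?_⟩
    intro g
    by_cases hg : ∃ a, i a = g
    · obtain ⟨a, rfl⟩ := hg
      rw [← map_inv, extendByZero_apply_mem i hi, extendByZero_apply_mem i hi]
      exact halt a
    · have hg' : ¬∃ a, i a = g⁻¹ := by
        rintro ⟨a, ha⟩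
        exact hg ⟨a⁻¹, by rw [map_inv, ha, inv_inv]⟩
      rw [extendByZero_apply_not_mem i f hg, extendByZero_apply_not_mem i f hg', neg_zero]
  · -- additive
    intro f g
    funext x
    by_cases hx : ∃ a, i a = x
    · obtain ⟨a, rfl⟩ := hx
      simp [extendByZero_apply_mem i hi]
    · simp [extendByZero_apply_not_mem i _ hx]
  · -- scalar
    intro a f
    funext x
    by_cases hx : ∃ b, i b = x
    · obtain ⟨b, rfl⟩ := hx
      simp [extendByZero_apply_mem i hi]
    · simp [extendByZero_apply_not_mem i _ hx]
  · -- isometry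
    rintro f ⟨⟨C, hC⟩, -⟩
    have hFC := hbound f C hC
    have hDf0 := defectNorm_nonneg hC
    apply le_antisymm
    · -- defectNorm F ≤ defectNorm f
      apply Real.iSup_le _ hDf0
      rintro ⟨x, y⟩
      simp only []
      by_cases hx : ∃ a, i a = x
      · obtain ⟨a, rfl⟩ := hx
        by_cases hy : ∃ b, i b = y
        · obtain ⟨b, rfl⟩ := hy
          rw [← map_mul, extendByZero_apply_mem i hi, extendByZero_apply_mem i hi,
            extendByZero_apply_mem i hi]
          exact le_defectNorm hC a b
        · have hxy : ¬∃ c, i c = i a * y := by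
            rintro ⟨c, hc⟩
            exact hy ⟨a⁻¹ * c, by rw [map_mul, map_inv, hc]; group⟩
          rw [extendByZero_apply_not_mem i f hxy, extendByZero_apply_not_mem i f hy,
            extendByZero_apply_mem i hi]
          simpa using abs_le_defectNorm hC a
      · by_cases hy : ∃ b, i b = y
        · obtain ⟨b, rfl⟩ := hy
          have hxy : ¬∃ c, i c = x * i b := by
            rintro ⟨c, hc⟩
            exact hx ⟨c * b⁻¹, by rw [map_mul, map_inv, hc]; group⟩
          rw [extendByZero_apply_not_mem i f hxy, extendByZero_apply_not_mem i f hx,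
            extendByZero_apply_mem i hi]
          simpa using abs_le_defectNorm hC b
        · by_cases hxy : ∃ c, i c = x * y
          · obtain ⟨c, hc⟩ := hxy
            rw [← hc, extendByZero_apply_mem i hi, extendByZero_apply_not_mem i f hx,
              extendByZero_apply_not_mem i f hy]
            simpa using abs_le_defectNorm hC c
          · rw [extendByZero_apply_not_mem i f hxy, extendByZero_apply_not_mem i f hx,
              extendByZero_apply_not_mem i f hy]
            simpa using hDf0
    · -- defectNorm f ≤ defectNorm F
      have hDF0 := defectNorm_nonneg hFC
      apply Real.iSup_le _ hDF0
      rintro ⟨a, b⟩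
      have := le_defectNorm hFC (i a) (i b)
      rw [← map_mul, extendByZero_apply_mem i hi, extendByZero_apply_mem i hi,
        extendByZero_apply_mem i hi] at this
      exact this
  · -- injective
    rintro f - g - hfg
    funext h
    have := congrFun hfg (i h)
    rwa [extendByZero_apply_mem i hi, extendByZero_apply_mem i hi] at this
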